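/- Let P be an n×n row-stochastic matrix with stationary distribution ν (νᵀ P = νᵀ) having all components positive, N = diag(ν), γ ∈ [0,1), and let Φ ∈ ℝ^{n×K} have linearly independent columns. Then the origin is a globally asymptotically stable equilibrium of the linear ODE ẏ = A y with A = Φᵀ N ( γP − I ) Φ; in particular, for every x ∈ ℝ^K, ‖exp(tA) x‖ → 0 as t → ∞. -/

import Mathlib

open Matrix Filter

lemma expMulVecDeriv {K : ℕ} (A : Matrix (Fin K) (Fin K) ℝ) (x : Fin K → ℝ) (t : ℝ) :
    HasDerivAt (fun u : ℝ => (NormedSpace.exp (u • A)).mulVec x)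
      (A.mulVec ((NormedSpace.exp (t • A)).mulVec x)) t := by
  letI : SeminormedRing (Matrix (Fin K) (Fin K) ℝ) := Matrix.linftyOpSemiNormedRing
  letI : NormedRing (Matrix (Fin K) (Fin K) ℝ) := Matrix.linftyOpNormedRing
  letI : NormedAlgebra ℝ (Matrix (Fin K) (Fin K) ℝ) := Matrix.linftyOpNormedAlgebra
  have h := hasDerivAt_exp_smul_const' (𝕂 := ℝ) A t
  let L : Matrix (Fin K) (Fin K) ℝ →ₗ[ℝ] (Fin K → ℝ) :=
    { toFun := fun B => B.mulVec x
      map_add' := fun B C => Matrix.add_mulVec B C x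
      map_smul' := fun r B => Matrix.smul_mulVec r B x }
  have hL := (LinearMap.toContinuousLinearMap L).hasFDerivAt.comp_hasDerivAt t h
  exact hL.congr_deriv (by
    show (A * NormedSpace.exp (t • A)) *ᵥ x = _
    exact (Matrix.mulVec_mulVec _ _ _).symm)

lemma quadNeg {n : ℕ} (P : Matrix (Fin n) (Fin n) ℝ)
    (hP_nonneg : ∀ i j, 0 ≤ P i j) (hP_rowsum : ∀ i, ∑ j, P i j = 1)
    (ν : Fin n → ℝ) (hν_pos : ∀ i, 0 < ν i)
    (hν_stat : Matrix.vecMul ν P = ν)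
    (γ : ℝ) (hγ0 : 0 ≤ γ) (hγ1 : γ < 1)
    (v : Fin n → ℝ) (hv : v ≠ 0) :
    v ⬝ᵥ ((Matrix.diagonal ν) *ᵥ ((γ • P - 1) *ᵥ v)) < 0 := by
  set S : ℝ := ∑ i, ν i * (v i * (P *ᵥ v) i) with hS
  set W : ℝ := ∑ i, ν i * v i ^ 2 with hW
  set W' : ℝ := ∑ i, ν i * (P *ᵥ v) i ^ 2 with hW'
  -- expansion
  have expand : v ⬝ᵥ ((Matrix.diagonal ν) *ᵥ ((γ • P - 1) *ᵥ v)) = γ * S - W := by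
    have h : ∀ i, v i * ((Matrix.diagonal ν) *ᵥ ((γ • P - 1) *ᵥ v)) i
        = γ * (ν i * (v i * (P *ᵥ v) i)) - ν i * v i ^ 2 := by
      intro i
      simp [Matrix.mulVec_diagonal, Matrix.sub_mulVec, Matrix.smul_mulVec,
        Matrix.one_mulVec, Pi.sub_apply, Pi.smul_apply, smul_eq_mul]
      ring
    calc v ⬝ᵥ ((Matrix.diagonal ν) *ᵥ ((γ • P - 1) *ᵥ v))
        = ∑ i, (γ * (ν i * (v i * (P *ᵥ v) i)) - ν i * v i ^ 2) := Finset.sum_congr rfl (fun i _ => h i)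
      _ = γ * S - W := by rw [Finset.sum_sub_distrib, ← Finset.mul_sum]
  -- positivity of W
  have hW0 : 0 ≤ W := Finset.sum_nonneg fun i _ => mul_nonneg (hν_pos i).le (sq_nonneg _)
  have hWpos : 0 < W := by
    obtain ⟨j, hj⟩ := Function.ne_iff.mp hv
    refine Finset.sum_pos' (fun i _ => mul_nonneg (hν_pos i).le (sq_nonneg _)) ⟨j, Finset.mem_univ j, ?_⟩
    exact mul_pos (hν_pos j) (sq_pos_of_ne_zero hj)
  -- W' ≤ W (Jensen + stationarity)
  have hW'W : W' ≤ W := by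
    have hJensen : ∀ i, (P *ᵥ v) i ^ 2 ≤ ∑ j, P i j * v j ^ 2 := by
      intro i
      have hcs := Finset.sum_mul_sq_le_sq_mul_sq Finset.univ
        (fun j => Real.sqrt (P i j)) (fun j => Real.sqrt (P i j) * v j)
      have h1 : ∀ j, Real.sqrt (P i j) * (Real.sqrt (P i j) * v j) = P i j * v j := by
        intro j; rw [← mul_assoc, Real.mul_self_sqrt (hP_nonneg i j)]
      have h2 : ∀ j, Real.sqrt (P i j) ^ 2 = P i j := fun j => Real.sq_sqrt (hP_nonneg i j)
      have h3 : ∀ j, (Real.sqrt (P i j) * v j) ^ 2 = P i j * v j ^ 2 := by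
        intro j; rw [mul_pow, h2]
      simp only [h1, h2, h3, hP_rowsum i, one_mul] at hcs
      calc (P *ᵥ v) i ^ 2 = (∑ j, P i j * v j) ^ 2 := rfl
        _ ≤ ∑ j, P i j * v j ^ 2 := hcs
    calc W' ≤ ∑ i, ν i * ∑ j, P i j * v j ^ 2 :=
          Finset.sum_le_sum fun i _ => mul_le_mul_of_nonneg_left (hJensen i) (hν_pos i).le
      _ = ∑ j, (∑ i, ν i * P i j) * v j ^ 2 := by
          simp_rw [Finset.mul_sum, Finset.sum_mul]
          rw [Finset.sum_comm]
          congr 1; ext j; congr 1; ext i; ring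
      _ = W := by
          refine Finset.sum_congr rfl fun j _ => ?_
          have := congrFun hν_stat j
          simp only [Matrix.vecMul, dotProduct] at this
          rw [show ∑ i, ν i * P i j = ν j from this]
  have hW'0 : 0 ≤ W' := Finset.sum_nonneg fun i _ => mul_nonneg (hν_pos i).le (sq_nonneg _)
  -- Cauchy-Schwarz: S^2 ≤ W * W'
  have hS2 : S ^ 2 ≤ W * W' := by
    have hcs := Finset.sum_mul_sq_le_sq_mul_sq Finset.univ
      (fun i => Real.sqrt (ν i) * v i) (fun i => Real.sqrt (ν i) * (P *ᵥ v) i)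
    have h1 : ∀ i, (Real.sqrt (ν i) * v i) * (Real.sqrt (ν i) * (P *ᵥ v) i)
        = ν i * (v i * (P *ᵥ v) i) := by
      intro i
      rw [show (Real.sqrt (ν i) * v i) * (Real.sqrt (ν i) * (P *ᵥ v) i)
        = (Real.sqrt (ν i) * Real.sqrt (ν i)) * (v i * (P *ᵥ v) i) by ring,
        Real.mul_self_sqrt (hν_pos i).le]
    have h2 : ∀ i, (Real.sqrt (ν i) * v i) ^ 2 = ν i * v i ^ 2 := by
      intro i; rw [mul_pow, Real.sq_sqrt (hν_pos i).le]
    have h3 : ∀ i, (Real.sqrt (ν i) * (P *ᵥ v) i) ^ 2 = ν i * (P *ᵥ v) i ^ 2 := by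
      intro i; rw [mul_pow, Real.sq_sqrt (hν_pos i).le]
    simp only [h1, h2, h3] at hcs
    exact hcs
  have hSW : S ≤ W := by nlinarith [hS2, hW'W, hW0, hW'0, hWpos]
  rw [expand]
  nlinarith [hSW, hWpos, hγ0, hγ1]

lemma stab {K : ℕ} (hK : K ≠ 0) (A : Matrix (Fin K) (Fin K) ℝ)
    (hQneg : ∀ y : Fin K → ℝ, y ≠ 0 → y ⬝ᵥ (A *ᵥ y) < 0) (x : Fin K → ℝ)
    (expDeriv : ∀ t : ℝ, HasDerivAt (fun u : ℝ => (NormedSpace.exp (u • A)).mulVec x)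
      (A.mulVec ((NormedSpace.exp (t • A)).mulVec x)) t) :
    Tendsto (fun t : ℝ => ‖(NormedSpace.exp (t • A)).mulVec x‖) atTop (nhds 0) := by
  set Q : (Fin K → ℝ) → ℝ := fun y => y ⬝ᵥ (A *ᵥ y) with hQdef
  have hQcont : Continuous Q := by
    show Continuous fun y : Fin K → ℝ => ∑ i, y i * ∑ j, A i j * y j
    exact continuous_finset_sum _ fun i _ =>
      (continuous_apply i).mul (continuous_finset_sum _ fun j _ =>
        continuous_const.mul (continuous_apply j))
  haveI : Nontrivial (Fin K → ℝ) := by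
    refine ⟨⟨0, fun _ => 1, fun h => ?_⟩⟩
    have := congrFun h ⟨0, Nat.pos_of_ne_zero hK⟩
    norm_num at this
  obtain ⟨y₀, hy₀mem, hy₀max⟩ := (isCompact_sphere (0 : Fin K → ℝ) 1).exists_isMaxOn
    (NormedSpace.sphere_nonempty.mpr zero_le_one) hQcont.continuousOn
  have hy₀norm : ‖y₀‖ = 1 := by simpa using mem_sphere_zero_iff_norm.mp hy₀mem
  have hy₀ne : y₀ ≠ 0 := fun h => by simp [h] at hy₀norm
  set c : ℝ := -Q y₀ with hc
  have hcpos : 0 < c := by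
    have := hQneg y₀ hy₀ne
    simp only [hc]; linarith
  -- Q y ≤ -c * ‖y‖^2
  have hQbound : ∀ y : Fin K → ℝ, Q y ≤ -c * ‖y‖ ^ 2 := by
    intro y
    by_cases hy : y = 0
    · subst hy; simp [hQdef]
    · have hny : 0 < ‖y‖ := norm_pos_iff.mpr hy
      have hu : (‖y‖⁻¹ • y) ∈ Metric.sphere (0 : Fin K → ℝ) 1 := by
        rw [mem_sphere_zero_iff_norm, norm_smul, norm_inv, norm_norm,
          inv_mul_cancel₀ hny.ne']
      have hmax : Q (‖y‖⁻¹ • y) ≤ Q y₀ := hy₀max hu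
      have hscale : Q (‖y‖⁻¹ • y) = ‖y‖⁻¹ ^ 2 * Q y := by
        simp only [hQdef, Matrix.mulVec_smul, smul_dotProduct, dotProduct_smul,
          smul_eq_mul]
        ring
      rw [hscale] at hmax
      -- hmax : ‖y‖⁻¹^2 * Q y ≤ Q y₀ = -c
      have h4 := mul_le_mul_of_nonneg_left hmax (sq_nonneg ‖y‖)
      have h5 : ‖y‖ ^ 2 * (‖y‖⁻¹ ^ 2 * Q y) = Q y := by
        field_simp
      rw [h5] at h4
      calc Q y ≤ ‖y‖ ^ 2 * Q y₀ := h4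
        _ = -c * ‖y‖ ^ 2 := by simp only [hc]; ring
  set E : (Fin K → ℝ) → ℝ := fun y => ∑ i, y i ^ 2 with hE
  have hEnonneg : ∀ y, 0 ≤ E y := fun y => Finset.sum_nonneg fun i _ => sq_nonneg _
  have hEbound : ∀ y : Fin K → ℝ, E y ≤ K * ‖y‖ ^ 2 := by
    intro y
    calc E y ≤ ∑ _i : Fin K, ‖y‖ ^ 2 := Finset.sum_le_sum fun i _ => by
          rw [show y i ^ 2 = ‖y i‖ ^ 2 by rw [Real.norm_eq_abs, sq_abs]]
          exact pow_le_pow_left₀ (norm_nonneg _) (norm_le_pi_norm y i) 2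
      _ = K * ‖y‖ ^ 2 := by simp [Finset.sum_const, nsmul_eq_mul]
  set c' : ℝ := c / K with hc'
  have hc'pos : 0 < c' := div_pos hcpos (by exact_mod_cast Nat.pos_of_ne_zero hK)
  have hQE : ∀ y : Fin K → ℝ, Q y ≤ -c' * E y := by
    intro y
    have h1 := hQbound y
    have h2 := hEbound y
    have h3 : c' * E y ≤ c * ‖y‖ ^ 2 := by
      calc c' * E y ≤ c' * (K * ‖y‖ ^ 2) := mul_le_mul_of_nonneg_left h2 hc'pos.le
        _ = c * ‖y‖ ^ 2 := by
          rw [hc']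
          field_simp
    linarith
  -- trajectory
  set y : ℝ → Fin K → ℝ := fun t => (NormedSpace.exp (t • A)).mulVec x with hy
  set g : ℝ → ℝ := fun t => E (y t) with hg
  have hgderiv : ∀ t, HasDerivAt g (2 * Q (y t)) t := by
    intro t
    have h1 : ∀ i : Fin K, HasDerivAt (fun t => y t i) ((A *ᵥ y t) i) t := fun i =>
      ((ContinuousLinearMap.proj i : (Fin K → ℝ) →L[ℝ] ℝ).hasFDerivAt).comp_hasDerivAt t
        (expDeriv t)
    have h2 : ∀ i : Fin K, HasDerivAt (fun t => y t i ^ 2) (2 * y t i * (A *ᵥ y t) i) t := by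
      intro i
      simpa using (h1 i).fun_pow 2
    have h3 := HasDerivAt.fun_sum (fun i (_ : i ∈ Finset.univ) => h2 i)
    refine h3.congr_deriv (Eq.symm ?_)
    show 2 * (∑ i, y t i * (A *ᵥ y t) i) = ∑ i : Fin K, 2 * y t i * (A *ᵥ y t) i
    rw [Finset.mul_sum]
    exact Finset.sum_congr rfl fun i _ => by ring
  set h : ℝ → ℝ := fun t => g t * Real.exp (2 * c' * t) with hh
  have hhderiv : ∀ t, HasDerivAt h
      (2 * Q (y t) * Real.exp (2 * c' * t) + g t * (Real.exp (2 * c' * t) * (2 * c'))) t := by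
    intro t
    have he : HasDerivAt (fun t : ℝ => Real.exp (2 * c' * t)) (Real.exp (2 * c' * t) * (2 * c')) t := by
      simpa using ((hasDerivAt_id t).const_mul (2 * c')).exp
    exact (hgderiv t).mul he
  have hanti : Antitone h := by
    apply antitone_of_deriv_nonpos (fun t => (hhderiv t).differentiableAt)
    intro t
    rw [(hhderiv t).deriv]
    have hqe := hQE (y t)
    have hgt : g t = E (y t) := rfl
    have hexp := Real.exp_pos (2 * c' * t)
    nlinarith [hqe, hexp, hEnonneg (y t)]
  have hgbound : ∀ t : ℝ, 0 ≤ t → g t ≤ g 0 * Real.exp (-(2 * c') * t) := by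
    intro t ht
    have h1 : g t * Real.exp (2 * c' * t) ≤ g 0 * Real.exp (2 * c' * 0) := hanti ht
    have hepos := Real.exp_pos (2 * c' * t)
    simp only [mul_zero, Real.exp_zero, mul_one] at h1
    rw [neg_mul, Real.exp_neg, ← div_eq_mul_inv, le_div_iff₀ hepos]
    exact h1
  have hg0 : 0 ≤ g 0 := hEnonneg _
  have hnormle : ∀ t : ℝ, ‖y t‖ ≤ Real.sqrt (g t) := by
    intro t
    apply (pi_norm_le_iff_of_nonneg (Real.sqrt_nonneg _)).mpr
    intro i
    rw [Real.norm_eq_abs, ← Real.sqrt_sq_eq_abs]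
    exact Real.sqrt_le_sqrt (Finset.single_le_sum (fun j _ => sq_nonneg (y t j)) (Finset.mem_univ i))
  have hfinal : ∀ t : ℝ, 0 ≤ t → ‖y t‖ ≤ Real.sqrt (g 0) * Real.exp (-c' * t) := by
    intro t ht
    calc ‖y t‖ ≤ Real.sqrt (g t) := hnormle t
      _ ≤ Real.sqrt (g 0 * Real.exp (-(2 * c') * t)) := Real.sqrt_le_sqrt (hgbound t ht)
      _ = Real.sqrt (g 0) * Real.exp (-c' * t) := by
          rw [Real.sqrt_mul hg0]
          congr 1
          rw [show -(2 * c') * t = (-c' * t) + (-c' * t) by ring, Real.exp_add, ← sq,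
            Real.sqrt_sq (Real.exp_nonneg _)]
  have hrhs : Tendsto (fun t : ℝ => Real.sqrt (g 0) * Real.exp (-c' * t)) atTop (nhds 0) := by
    have h1 : Tendsto (fun t : ℝ => c' * t) atTop atTop :=
      Tendsto.const_mul_atTop hc'pos tendsto_id
    have h2 : Tendsto (fun t : ℝ => -c' * t) atTop atBot := by
      simp only [neg_mul]
      exact tendsto_neg_atTop_atBot.comp h1
    have h3 : Tendsto (fun t : ℝ => Real.exp (-c' * t)) atTop (nhds 0) :=
      Real.tendsto_exp_atBot.comp h2
    have h4 := h3.const_mul (Real.sqrt (g 0))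
    simpa using h4
  refine squeeze_zero' (Filter.Eventually.of_forall fun t => norm_nonneg _) ?_ hrhs
  filter_upwards [eventually_ge_atTop (0 : ℝ)] with t ht using hfinal t ht


/-- For a row-stochastic `P` with everywhere-positive stationary
distribution `ν`, `N = diag(ν)`, `γ ∈ [0,1)`, and `Φ` with linearly independent columns,
the origin is globally asymptotically stable for `ẏ = Ay` with `A = Φᵀ N (γP − I) Φ`:
for every `x`, `‖exp(tA) x‖ → 0` as `t → ∞`. -/
theorem critic_limit_ode_globally_asymptotically_stable
    {n K : ℕ}
    (P : Matrix (Fin n) (Fin n) ℝ)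
    (hP_nonneg : ∀ i j, 0 ≤ P i j)
    (hP_rowsum : ∀ i, ∑ j, P i j = 1)
    (ν : Fin n → ℝ)
    (hν_pos : ∀ i, 0 < ν i)
    (hν_sum : ∑ i, ν i = 1)
    (hν_stat : Matrix.vecMul ν P = ν)
    (N : Matrix (Fin n) (Fin n) ℝ) (hN : N = Matrix.diagonal ν)
    (γ : ℝ) (hγ0 : 0 ≤ γ) (hγ1 : γ < 1)
    (Φ : Matrix (Fin n) (Fin K) ℝ)
    (hΦ : LinearIndependent ℝ Φᵀ)
    (A : Matrix (Fin K) (Fin K) ℝ)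
    (hA : A = Φᵀ * N * (γ • P - 1) * Φ) :
    ∀ x : Fin K → ℝ,
      Tendsto (fun t : ℝ => ‖(NormedSpace.exp (t • A)).mulVec x‖) atTop (nhds 0) := by
  intro x
  by_cases hK : K = 0
  · subst hK
    have hz : ∀ t : ℝ, (NormedSpace.exp (t • A)).mulVec x = 0 :=
      fun t => funext fun i => i.elim0
    simp only [hz, norm_zero]
    exact tendsto_const_nhds
  · subst hN
    refine stab hK A ?_ x (expMulVecDeriv A x)
    intro y hy
    have hv : Φ *ᵥ y ≠ 0 := by
      intro h
      apply hy
      have hsum : ∑ k, y k • Φᵀ k = 0 := by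
        rw [show ∑ k, y k • Φᵀ k = Φ *ᵥ y by
          ext i
          simp [Matrix.mulVec, dotProduct, Matrix.transpose_apply, Finset.sum_apply,
            mul_comm]]
        exact h
      have hli := Fintype.linearIndependent_iff.mp hΦ y hsum
      funext k; exact hli k
    have heq : y ⬝ᵥ (A *ᵥ y)
        = (Φ *ᵥ y) ⬝ᵥ ((Matrix.diagonal ν) *ᵥ ((γ • P - 1) *ᵥ (Φ *ᵥ y))) := by
      subst hA
      simp only [← Matrix.mulVec_mulVec]
      rw [Matrix.dotProduct_mulVec, Matrix.vecMul_transpose]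
    rw [heq]
    exact quadNeg P hP_nonneg hP_rowsum ν hν_pos hν_stat γ hγ0 hγ1 (Φ *ᵥ y) hv
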